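/- Let a, b, c be nonnegative reals and A ∈ [0, π] be such that cosh a = cosh b · cosh c − sinh b · sinh c · cos A, and assume b ≤ 1/4 and c ≤ 1/2. Let ā ≥ 0 be defined by ā² = b² + c² − 2 b c cos A. Then a² ≤ (1 + b²) ā². -/

import Mathlib

/-- `sinh x ≤ x * cosh x` for `0 ≤ x`. -/
lemma aux_sinh_le_mul_cosh {x : ℝ} (hx : 0 ≤ x) : Real.sinh x ≤ x * Real.cosh x := by
  have hder : ∀ y : ℝ, HasDerivAt (fun u => u * Real.cosh u - Real.sinh u)
      (y * Real.sinh y) y := by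
    intro y
    have h := ((hasDerivAt_id y).mul (Real.hasDerivAt_cosh y)).sub (Real.hasDerivAt_sinh y)
    refine h.congr_deriv ?_
    simp [id_eq]
  have mono : MonotoneOn (fun u => u * Real.cosh u - Real.sinh u) (Set.Ici (0:ℝ)) := by
    apply monotoneOn_of_deriv_nonneg (convex_Ici 0)
    · exact (Continuous.sub (continuous_id.mul Real.continuous_cosh)
        Real.continuous_sinh).continuousOn
    · intro y hy
      exact (hder y).differentiableAt.differentiableWithinAt
    · intro y hy
      rw [interior_Ici] at hy
      rw [(hder y).deriv]
      exact mul_nonneg hy.le (Real.sinh_nonneg_iff.mpr hy.le)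
  have h0 := mono (Set.self_mem_Ici) (Set.mem_Ici.mpr hx) hx
  simpa using h0

/-- `cosh 1 < 2`. -/
lemma aux_cosh_one_lt_two : Real.cosh 1 < 2 := by
  rw [Real.cosh_eq]
  have h1 : Real.exp 1 < 2.7182818286 := Real.exp_one_lt_d9
  have h2 : Real.exp (-1) ≤ 1 := Real.exp_le_one_iff.mpr (by norm_num)
  norm_num
  nlinarith

/-- `x * cosh x - sinh x ≤ x ^ 3` for `0 ≤ x ≤ 3/4`. -/
lemma aux_key {x : ℝ} (hx0 : 0 ≤ x) (hx1 : x ≤ 3/4) :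
    x * Real.cosh x - Real.sinh x ≤ x ^ 3 := by
  have hder : ∀ y : ℝ, HasDerivAt (fun u => u ^ 3 - u * Real.cosh u + Real.sinh u)
      (3 * y ^ 2 - y * Real.sinh y) y := by
    intro y
    have h := ((hasDerivAt_pow 3 y).sub
      ((hasDerivAt_id y).mul (Real.hasDerivAt_cosh y))).add (Real.hasDerivAt_sinh y)
    refine h.congr_deriv ?_
    simp [id_eq]
    ring
  have mono : MonotoneOn (fun u => u ^ 3 - u * Real.cosh u + Real.sinh u)
      (Set.Icc (0:ℝ) (3/4)) := by
    apply monotoneOn_of_deriv_nonneg (convex_Icc 0 (3/4))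
    · exact (Continuous.add ((continuous_pow 3).sub
        (continuous_id.mul Real.continuous_cosh)) Real.continuous_sinh).continuousOn
    · intro y hy
      exact (hder y).differentiableAt.differentiableWithinAt
    · intro y hy
      rw [interior_Icc] at hy
      rw [(hder y).deriv]
      have hy0 : 0 < y := hy.1
      have hy1 : y < 3/4 := hy.2
      have h1 : Real.sinh y ≤ y * Real.cosh y := aux_sinh_le_mul_cosh hy0.le
      have h2 : Real.cosh y ≤ Real.cosh 1 := by
        rw [Real.cosh_le_cosh]
        rw [abs_of_nonneg hy0.le]
        rw [abs_one]
        linarith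
      have h3 : Real.cosh y < 2 := lt_of_le_of_lt h2 aux_cosh_one_lt_two
      nlinarith
  have h0 := mono (Set.mem_Icc.mpr ⟨le_refl 0, by norm_num⟩)
    (Set.mem_Icc.mpr ⟨hx0, hx1⟩) hx0
  simp only [Real.sinh_zero, Real.cosh_zero] at h0
  nlinarith [h0]

/-- `1 + x^2/2 ≤ cosh x`. -/
lemma aux_cosh_lb (x : ℝ) (hx : 0 ≤ x) : 1 + x ^ 2 / 2 ≤ Real.cosh x := by
  have h1 : Real.cosh x = 2 * Real.sinh (x/2) ^ 2 + 1 := by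
    have h2 : Real.cosh (2 * (x/2)) = Real.cosh (x/2) ^ 2 + Real.sinh (x/2) ^ 2 :=
      Real.cosh_two_mul _
    have h3 : Real.cosh (x/2) ^ 2 = Real.sinh (x/2) ^ 2 + 1 := Real.cosh_sq _
    rw [show 2 * (x/2) = x by ring] at h2
    rw [h2, h3]; ring
  have h4 : x / 2 ≤ Real.sinh (x/2) := Real.self_le_sinh_iff.mpr (by linarith)
  nlinarith [h4]

/-- Convexity of `t ↦ t^2/8 - cosh (√t)` on `[0, 9/16]`. -/
lemma aux_convex : ConvexOn ℝ (Set.Icc (0:ℝ) (9/16))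
    (fun t => t ^ 2 / 8 - Real.cosh (Real.sqrt t)) := by
  have hD : interior (Set.Icc (0:ℝ) (9/16)) = Set.Ioo 0 (9/16) := interior_Icc
  apply convexOn_of_hasDerivWithinAt2_nonneg (convex_Icc 0 (9/16))
    (f' := fun t => t / 4 - Real.sinh (Real.sqrt t) * (1 / (2 * Real.sqrt t)))
    (f'' := fun t => 1/4 - (Real.cosh (Real.sqrt t) * (1 / (2 * Real.sqrt t)) * (2 * Real.sqrt t)
      - Real.sinh (Real.sqrt t) * (2 * (1 / (2 * Real.sqrt t)))) / (2 * Real.sqrt t) ^ 2)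
  · exact (Continuous.sub ((continuous_pow 2).div_const 8)
      (Real.continuous_cosh.comp Real.continuous_sqrt)).continuousOn
  · intro t ht
    rw [hD] at ht
    have ht0 : 0 < t := ht.1
    have h1 : HasDerivAt (fun t : ℝ => t ^ 2 / 8) (t / 4) t := by
      have := (hasDerivAt_pow 2 t).div_const 8
      refine this.congr_deriv ?_
      norm_num
      ring
    have hsq := Real.hasDerivAt_sqrt (ne_of_gt ht0)
    have h2 : HasDerivAt (fun t : ℝ => Real.cosh (Real.sqrt t))
        (Real.sinh (Real.sqrt t) * (1 / (2 * Real.sqrt t))) t := hsq.cosh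
    exact (h1.sub h2).hasDerivWithinAt
  · intro t ht
    rw [hD] at ht
    have ht0 : 0 < t := ht.1
    have hsq := Real.hasDerivAt_sqrt (ne_of_gt ht0)
    have hs0 : 0 < Real.sqrt t := Real.sqrt_pos.mpr ht0
    have h1 : HasDerivAt (fun t : ℝ => t / 4) (1/4) t := (hasDerivAt_id t).div_const 4
    have hnum : HasDerivAt (fun t : ℝ => Real.sinh (Real.sqrt t))
        (Real.cosh (Real.sqrt t) * (1 / (2 * Real.sqrt t))) t := hsq.sinh
    have hden : HasDerivAt (fun t : ℝ => 2 * Real.sqrt t) (2 * (1 / (2 * Real.sqrt t))) t :=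
      hsq.const_mul 2
    have hne : 2 * Real.sqrt t ≠ 0 := by positivity
    have hdiv := hnum.div hden hne
    have h2 := h1.sub hdiv
    have heq : (fun t : ℝ => t / 4 - Real.sinh (Real.sqrt t) * (1 / (2 * Real.sqrt t)))
        = fun t : ℝ => t / 4 - Real.sinh (Real.sqrt t) / (2 * Real.sqrt t) := by
      funext u
      ring
    rw [heq]
    exact h2.hasDerivWithinAt
  · intro t ht
    rw [hD] at ht
    have ht0 : 0 < t := ht.1
    have hs0 : 0 < Real.sqrt t := Real.sqrt_pos.mpr ht0
    have hs2 : Real.sqrt t ^ 2 = t := Real.sq_sqrt ht0.le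
    have hs34 : Real.sqrt t ≤ 3/4 := by
      nlinarith [ht.2, hs0]
    have hkey := aux_key hs0.le hs34
    set s := Real.sqrt t with hs
    have hrw : (Real.cosh s * (1 / (2 * s)) * (2 * s)
        - Real.sinh s * (2 * (1 / (2 * s)))) / (2 * s) ^ 2
        = (s * Real.cosh s - Real.sinh s) / (4 * s ^ 3) := by
      field_simp
      ring
    rw [hrw]
    rw [sub_nonneg, div_le_iff₀ (by positivity)]
    nlinarith [hkey]

set_option maxHeartbeats 1000000 in
theorem hyperbolic_distortion_small_c
    (a b c A : ℝ) (ha : 0 ≤ a) (hb : 0 ≤ b) (hc : 0 ≤ c)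
    (hA : A ∈ Set.Icc (0 : ℝ) Real.pi)
    (hlaw : Real.cosh a = Real.cosh b * Real.cosh c
        - Real.sinh b * Real.sinh c * Real.cos A)
    (hb4 : b ≤ 1 / 4) (hc2 : c ≤ 1 / 2)
    (abar : ℝ) (habar : 0 ≤ abar)
    (habar2 : abar ^ 2 = b ^ 2 + c ^ 2 - 2 * b * c * Real.cos A) :
    a ^ 2 ≤ (1 + b ^ 2) * abar ^ 2 := by
  have hcos1 : Real.cos A ≤ 1 := Real.cos_le_one A
  have hcosm : -1 ≤ Real.cos A := Real.neg_one_le_cos A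
  set l : ℝ := (1 - Real.cos A) / 2 with hl
  have hcosA : Real.cos A = 1 - 2 * l := by rw [hl]; ring
  have hl0 : 0 ≤ l := by rw [hl]; linarith
  have hl1 : l ≤ 1 := by rw [hl]; linarith
  set x : ℝ := (b + c) ^ 2 with hxdef
  set y : ℝ := (b - c) ^ 2 with hydef
  have hxmem : x ∈ Set.Icc (0:ℝ) (9/16) := ⟨sq_nonneg _, by nlinarith⟩
  have hymem : y ∈ Set.Icc (0:ℝ) (9/16) := ⟨sq_nonneg _, by nlinarith⟩
  have habar2' : abar ^ 2 = l * x + (1 - l) * y := by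
    rw [habar2, hcosA, hxdef, hydef]; ring
  -- Jensen for the convex function
  have hkey := aux_convex.2 hxmem hymem hl0 (show (0:ℝ) ≤ 1 - l by linarith) (by ring)
  simp only [smul_eq_mul] at hkey
  have hsx : Real.sqrt x = b + c := by rw [hxdef]; exact Real.sqrt_sq (by linarith)
  have hsy : Real.cosh (Real.sqrt y) = Real.cosh (b - c) := by
    rw [hydef, Real.sqrt_sq_eq_abs, Real.cosh_abs]
  have hst : Real.sqrt (l * x + (1 - l) * y) = abar := by
    rw [← habar2', Real.sqrt_sq habar]
  rw [hst, hsx] at hkey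
  rw [hsy] at hkey
  -- hkey : (l*x+(1-l)*y)^2/8 - cosh abar ≤ l*(x^2/8 - cosh (b+c)) + (1-l)*(y^2/8 - cosh (b-c))
  have hcosha : Real.cosh a = l * Real.cosh (b + c) + (1 - l) * Real.cosh (b - c) := by
    rw [hlaw, Real.cosh_add, Real.cosh_sub, hcosA]; ring
  have hdefect : Real.cosh a ≤ Real.cosh abar + 2 * l * (1 - l) * (b * c) ^ 2 := by
    have hpoly : l * (x ^ 2 / 8) + (1 - l) * (y ^ 2 / 8) - (l * x + (1 - l) * y) ^ 2 / 8
        = 2 * l * (1 - l) * (b * c) ^ 2 := by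
      rw [hxdef, hydef]; ring
    rw [hcosha]
    linarith [hkey, hpoly]
  -- abar^2 dominates 4*l*(1-l)*c^2
  have habar_ge : 4 * l * (1 - l) * c ^ 2 ≤ abar ^ 2 := by
    have hsq : abar ^ 2 - 4 * l * (1 - l) * c ^ 2 = (b - (1 - 2 * l) * c) ^ 2 := by
      rw [habar2, hcosA]; ring
    have := sq_nonneg (b - (1 - 2 * l) * c)
    linarith
  have hsinh_abar : abar ^ 2 ≤ abar * Real.sinh abar := by
    have h := mul_le_mul_of_nonneg_left (Real.self_le_sinh_iff.mpr habar) habar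
    calc abar ^ 2 = abar * abar := pow_two abar
      _ ≤ abar * Real.sinh abar := h
  have hb2' : (0:ℝ) ≤ b ^ 2 / 2 := by positivity
  have h2 : Real.cosh a ≤ Real.cosh abar + b ^ 2 / 2 * (abar * Real.sinh abar) := by
    have q1 := mul_le_mul_of_nonneg_left habar_ge hb2'
    have q2 := mul_le_mul_of_nonneg_left hsinh_abar hb2'
    have q3 : b ^ 2 / 2 * (4 * l * (1 - l) * c ^ 2) = 2 * l * (1 - l) * (b * c) ^ 2 := by ring
    linarith [hdefect]
  -- step: cosh abar + (b^2/2) abar sinh abar ≤ cosh (k * abar)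
  set k : ℝ := Real.sqrt (1 + b ^ 2) with hk
  have hk0 : 0 ≤ k := Real.sqrt_nonneg _
  have hk2 : k ^ 2 = 1 + b ^ 2 := Real.sq_sqrt (by positivity)
  have hk1 : 1 ≤ k := by nlinarith [hk2, hk0]
  have h3 : Real.cosh abar + b ^ 2 / 2 * (abar * Real.sinh abar) ≤ Real.cosh (k * abar) := by
    have hrw : k * abar = abar + (k - 1) * abar := by ring
    rw [hrw, Real.cosh_add]
    have hkb0 : 0 ≤ (k - 1) * abar := mul_nonneg (by linarith) habar
    have s1 : (k - 1) * abar ≤ Real.sinh ((k - 1) * abar) := Real.self_le_sinh_iff.mpr hkb0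
    have s2 : 1 + ((k - 1) * abar) ^ 2 / 2 ≤ Real.cosh ((k - 1) * abar) := aux_cosh_lb _ hkb0
    have s3 : Real.sinh abar ≤ abar * Real.cosh abar := aux_sinh_le_mul_cosh habar
    have s4 : 0 ≤ Real.sinh abar := Real.sinh_nonneg_iff.mpr habar
    have s5 : (0:ℝ) < Real.cosh abar := Real.cosh_pos abar
    have p1 : Real.cosh abar * (1 + ((k - 1) * abar) ^ 2 / 2)
        ≤ Real.cosh abar * Real.cosh ((k - 1) * abar) :=
      mul_le_mul_of_nonneg_left s2 s5.le
    have p2 : ((k - 1) * abar) * Real.sinh abar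
        ≤ Real.sinh ((k - 1) * abar) * Real.sinh abar :=
      mul_le_mul_of_nonneg_right s1 s4
    have hcoef : (0:ℝ) ≤ (k - 1) ^ 2 * abar / 2 := by
      have : (0:ℝ) ≤ (k - 1) ^ 2 := sq_nonneg _
      positivity
    have p3 : (k - 1) ^ 2 * abar / 2 * Real.sinh abar
        ≤ (k - 1) ^ 2 * abar / 2 * (abar * Real.cosh abar) :=
      mul_le_mul_of_nonneg_left s3 hcoef
    have hb2 : (k - 1) ^ 2 + 2 * (k - 1) = b ^ 2 := by linear_combination hk2
    have p4 : ((k - 1) ^ 2 + 2 * (k - 1)) * (abar * Real.sinh abar)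
        = b ^ 2 * (abar * Real.sinh abar) := by rw [hb2]
    linarith [p1, p2, p3, p4]
  have h4 : Real.cosh a ≤ Real.cosh (k * abar) := le_trans h2 h3
  have h5 : |a| ≤ |k * abar| := Real.cosh_le_cosh.mp h4
  rw [abs_of_nonneg ha, abs_of_nonneg (mul_nonneg hk0 habar)] at h5
  have h6 : a ^ 2 ≤ (k * abar) ^ 2 := pow_le_pow_left₀ ha h5 2
  calc a ^ 2 ≤ (k * abar) ^ 2 := h6
    _ = (1 + b ^ 2) * abar ^ 2 := by rw [mul_pow, hk2]
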